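/- Let k be an algebraically closed field, A an associative unital k-algebra, and W₁, …, W_m pairwise non-isomorphic finite-dimensional simple left A-modules. For each l choose a k-basis w₁^{(l)}, …, w_{d_l}^{(l)} of W_l and define the matrix coefficient functionals t^{(l)}_{ij} : A → k by x·w_i^{(l)} = Σ_j t^{(l)}_{ji}(x)·w_j^{(l)} for all x ∈ A. Then the whole family { t^{(l)}_{ij} | 1 ≤ l ≤ m, 1 ≤ i, j ≤ d_l } is linearly independent in the dual space A* = Hom_k(A, k). -/

import Mathlib

section Aux

variable {k A : Type*} [Field k] [IsAlgClosed k] [Ring A] [Algebra k A]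
  {m : ℕ} {W : Fin m → Type*}
  [∀ l, AddCommGroup (W l)] [∀ l, Module k (W l)] [∀ l, Module A (W l)]
  [∀ l, IsScalarTower k A (W l)] [∀ l, FiniteDimensional k (W l)]
  [∀ l, IsSimpleModule A (W l)]

/-- Schur's lemma over an algebraically closed field: every `A`-endomorphism of a
finite-dimensional simple module is a scalar. -/
lemma MCaux.schur_scalar (l : Fin m) (h : W l →ₗ[A] W l) : ∃ c : k, ∀ u, h u = c • u := by
  have : Nontrivial (W l) := IsSimpleModule.nontrivial A (W l)
  let g : Module.End k (W l) :=
    { toFun := h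
      map_add' := h.map_add
      map_smul' := fun c w => by
        simp only [RingHom.id_apply]
        rw [← algebraMap_smul A c w, h.map_smul, algebraMap_smul] }
  obtain ⟨c, hc⟩ := Module.End.exists_eigenvalue g
  obtain ⟨v, hv⟩ := hc.exists_hasEigenvector
  have h0 : (h - c • (LinearMap.id : W l →ₗ[A] W l)) v = 0 := by
    have hgv : h v = c • v := hv.apply_eq_smul
    simp only [LinearMap.sub_apply, LinearMap.smul_apply, LinearMap.id_apply, hgv, sub_self]
  rcases LinearMap.injective_or_eq_zero (h - c • (LinearMap.id : W l →ₗ[A] W l)) with hinj | hz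
  · exact absurd (hinj (by rw [h0, map_zero])) hv.right
  · refine ⟨c, fun u => ?_⟩
    have := LinearMap.ext_iff.mp hz u
    simpa [sub_eq_zero] using this

lemma MCaux.hom_eq_zero (hpair : ∀ l l' : Fin m, l ≠ l' → IsEmpty ((W l) ≃ₗ[A] (W l')))
    {l l' : Fin m} (hne : l' ≠ l) (h : W l' →ₗ[A] W l) : h = 0 := by
  rcases h.bijective_or_eq_zero with hb | hz
  · exact ((hpair l' l hne).false (LinearEquiv.ofBijective h hb)).elim
  · exact hz

lemma MCaux.commute_aux (hpair : ∀ l l' : Fin m, l ≠ l' → IsEmpty ((W l) ≃ₗ[A] (W l')))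
    (f : ∀ l, W l →ₗ[k] W l) (l l' : Fin m)
    (h : W l' →ₗ[A] W l) (u : W l') : f l (h u) = h (f l' u) := by
  rcases eq_or_ne l' l with rfl | hne
  · obtain ⟨c, hc⟩ := MCaux.schur_scalar (k := k) l' h
    rw [hc, hc, map_smul]
  · rw [MCaux.hom_eq_zero hpair hne h]
    simp

/-- Density: there is an element of `A` acting as any prescribed tuple of `k`-linear
endomorphisms of the pairwise non-isomorphic simple modules. -/
lemma MCaux.density (hpair : ∀ l l' : Fin m, l ≠ l' → IsEmpty ((W l) ≃ₗ[A] (W l')))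
    (d : Fin m → ℕ) (b : ∀ l, Module.Basis (Fin (d l)) k (W l))
    (f : ∀ l, W l →ₗ[k] W l) :
    ∃ a : A, ∀ (l) (w : W l), a • w = f l w := by
  classical
  set Q := (Σ l : Fin m, Fin (d l)) with hQ
  haveI hss : IsSemisimpleModule A (∀ q : Q, W q.1) := by
    refine isSemisimpleModule_of_isSemisimpleModule_submodule'
      (p := fun q : Q => LinearMap.range (LinearMap.single A (fun q : Q => W q.1) q)) ?_ ?_
    · intro q
      have hinj : Function.Injective (LinearMap.single A (fun q : Q => W q.1) q) := by
        rw [LinearMap.coe_single]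
        exact Pi.single_injective q
      exact IsSemisimpleModule.congr (LinearEquiv.ofInjective _ hinj).symm
    · exact LinearMap.iSup_range_single A _
  set v : ∀ q : Q, W q.1 := fun q => b q.1 q.2 with hv
  set U : Submodule A (∀ q : Q, W q.1) :=
    LinearMap.range (LinearMap.toSpanSingleton A (∀ q : Q, W q.1) v) with hU
  obtain ⟨C, hC⟩ := exists_isCompl U
  set π : (∀ q : Q, W q.1) →ₗ[A] (∀ q : Q, W q.1) :=
    U.subtype ∘ₗ U.linearProjOfIsCompl C hC with hπ
  set F : (∀ q : Q, W q.1) → (∀ q : Q, W q.1) := fun w q => f q.1 (w q) with hF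
  have hcomm : ∀ w, F (π w) = π (F w) := by
    intro w
    funext q
    have : f q.1 (π w q) = π (F w) q := by
      calc f q.1 (π w q)
          = f q.1 (π (∑ q' : Q, Pi.single q' (w q')) q) := by
            rw [Finset.univ_sum_single w]
        _ = f q.1 ((∑ q' : Q, π (Pi.single q' (w q'))) q) := by
            rw [← map_sum]
        _ = ∑ q' : Q, f q.1 (π (Pi.single q' (w q')) q) := by
            rw [Finset.sum_apply, map_sum]
        _ = ∑ q' : Q, π (Pi.single q' (f q'.1 (w q'))) q := by
            refine Finset.sum_congr rfl fun q' _ => ?_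
            have := MCaux.commute_aux hpair f q.1 q'.1
              ((LinearMap.proj q) ∘ₗ π ∘ₗ (LinearMap.single A (fun q : Q => W q.1) q')) (w q')
            simpa using this
        _ = (∑ q' : Q, π (Pi.single q' (f q'.1 (w q')))) q := by
            rw [Finset.sum_apply]
        _ = π (∑ q' : Q, Pi.single q' (f q'.1 (w q'))) q := by
            rw [← map_sum]
        _ = π (F w) q := by
            rw [show (∑ q' : Q, Pi.single q' (f q'.1 (w q'))) = F w from
              Finset.univ_sum_single (F w)]
    exact this
  have hvU : v ∈ U := ⟨1, by simp [LinearMap.toSpanSingleton_apply]⟩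
  have hπv : π v = v := by
    have h1 : U.linearProjOfIsCompl C hC v = ⟨v, hvU⟩ :=
      Submodule.linearProjOfIsCompl_apply_left hC ⟨v, hvU⟩
    simp [hπ, h1]
  have hFvU : F v ∈ U := by
    have : F v = π (F v) := by rw [← hcomm v, hπv]
    rw [this]
    exact (U.linearProjOfIsCompl C hC (F v)).2
  obtain ⟨a, ha⟩ := hFvU
  refine ⟨a, fun l w => ?_⟩
  have hbasis : ∀ q : Q, a • (b q.1 q.2) = f q.1 (b q.1 q.2) := by
    intro q
    have := congrFun ha q
    simpa [LinearMap.toSpanSingleton_apply, hv, hF] using this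
  let g1 : W l →ₗ[k] W l :=
    { toFun := fun w => a • w
      map_add' := fun x y => smul_add a x y
      map_smul' := fun c w => by
        simp only [RingHom.id_apply]
        exact smul_comm a c w }
  have hg : g1 = f l := Module.Basis.ext (b l) (fun j => hbasis ⟨l, j⟩)
  exact LinearMap.congr_fun hg w

end Aux

/-- Let `k` be an algebraically closed field, `A` a unital `k`-algebra and
`W₁, …, W_m` pairwise non-isomorphic finite-dimensional simple left `A`-modules with chosen
`k`-bases. Then the whole family of matrix coefficient functionals
`t^{(l)}_{ij}(x) = ((b l).repr (x • b l j)) i` is linearly independent in the dual space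
`A* = Hom_k(A, k)`. -/
theorem matrix_coefficients_linearIndependent {k A : Type*} [Field k] [IsAlgClosed k]
    [Ring A] [Algebra k A] {m : ℕ} (W : Fin m → Type*)
    [∀ l, AddCommGroup (W l)] [∀ l, Module k (W l)] [∀ l, Module A (W l)]
    [∀ l, IsScalarTower k A (W l)] [∀ l, FiniteDimensional k (W l)]
    [∀ l, IsSimpleModule A (W l)]
    (hpair : ∀ l l' : Fin m, l ≠ l' → IsEmpty ((W l) ≃ₗ[A] (W l')))
    (d : Fin m → ℕ) (b : ∀ l, Module.Basis (Fin (d l)) k (W l))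
    (T : (Σ l : Fin m, Fin (d l) × Fin (d l)) → Module.Dual k A)
    (hT : ∀ (p : Σ l : Fin m, Fin (d l) × Fin (d l)) (x : A),
      T p x = (b p.1).repr (x • b p.1 p.2.2) p.2.1) :
    LinearIndependent k T := by
  classical
  rw [Fintype.linearIndependent_iff]
  intro c hc p₀
  obtain ⟨l₀, i₀, j₀⟩ := p₀
  set E₀ : W l₀ →ₗ[k] W l₀ := (b l₀).constr k (Pi.single j₀ (b l₀ i₀)) with hE
  set f : ∀ l, W l →ₗ[k] W l := Pi.single l₀ E₀ with hf
  obtain ⟨a, ha⟩ := MCaux.density hpair d b f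
  have hx : ∑ p, c p • T p a = 0 := by
    have := congrArg (fun φ => φ a) hc
    simpa [LinearMap.sum_apply] using this
  have hTa : ∀ p : (Σ l : Fin m, Fin (d l) × Fin (d l)),
      T p a = (b p.1).repr (f p.1 (b p.1 p.2.2)) p.2.1 := by
    intro p; rw [hT, ha]
  have hmain : ∑ p, c p • T p a = c ⟨l₀, i₀, j₀⟩ := by
    rw [Finset.sum_eq_single (⟨l₀, (i₀, j₀)⟩ : Σ l : Fin m, Fin (d l) × Fin (d l))]
    · rw [hTa]
      simp only [hf, Pi.single_eq_same, hE]
      rw [Module.Basis.constr_basis]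
      simp [Module.Basis.repr_self, smul_eq_mul]
    · rintro ⟨l, i, j⟩ - hne
      rw [hTa]
      rcases eq_or_ne l l₀ with rfl | hl
      · simp only [hf, Pi.single_eq_same, hE]
        rw [Module.Basis.constr_basis]
        rcases eq_or_ne j j₀ with rfl | hj
        · rcases eq_or_ne i i₀ with rfl | hi
          · exact absurd rfl hne
          · simp [Module.Basis.repr_self, Finsupp.single_apply, hi, Ne.symm hi]
        · simp [Pi.single_eq_of_ne hj]
      · simp [hf, Pi.single_eq_of_ne hl]
    · intro h; exact absurd (Finset.mem_univ _) h
  rw [hmain] at hx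
  exact hx
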